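/- Let R be a stably finite unital ring and let d₁, d₂, d₃, k, l be finite index types. Let G be the square block matrix of size d₁ ⊕ d₂ ⊕ d₃ over R which is block upper triangular, i.e., G = [[G₁₁, G₁₂, G₁₃], [0, G₂₂, G₂₃], [0, 0, G₃₃]] with G_{ij} ∈ M_{d_i×d_j}(R). If G is invertible, then G₁₁, G₂₂ and G₃₃ are invertible, and for all matrices C ∈ M_{k×d₂}(R), C₂ ∈ M_{k×d₃}(R), B₁ ∈ M_{d₁×l}(R), B ∈ M_{d₂×l}(R), one has [0, C, C₂] · G⁻¹ · [B₁; B; 0] = C · G₂₂⁻¹ · B, where [0, C, C₂] denotes the k × (d₁ ⊕ d₂ ⊕ d₃) block row and [B₁; B; 0] the (d₁ ⊕ d₂ ⊕ d₃) × l block column. -/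

import Mathlib

open Matrix

section Aux

variable {R : Type*} [Ring R]

lemma sf_fintype (hsf : ∀ (j : ℕ) (U V : Matrix (Fin j) (Fin j) R), U * V = 1 → V * U = 1)
    {n : Type*} [Fintype n] [DecidableEq n]
    (U V : Matrix n n R) (h : U * V = 1) : V * U = 1 := by
  let e : n ≃ Fin (Fintype.card n) := Fintype.equivFin n
  have h2 : U.submatrix e.symm e.symm * V.submatrix e.symm e.symm = 1 := by
    rw [Matrix.submatrix_mul_equiv, h, Matrix.submatrix_one_equiv]
  have h3 := hsf _ _ _ h2
  have h4 := congrArg (fun M => M.submatrix e e) h3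
  simpa [Matrix.submatrix_mul_equiv, Matrix.submatrix_one_equiv,
    Matrix.submatrix_submatrix] using h4

lemma tri_units (hsf : ∀ (j : ℕ) (U V : Matrix (Fin j) (Fin j) R), U * V = 1 → V * U = 1) {m n : Type*} [Fintype m] [DecidableEq m] [Fintype n] [DecidableEq n]
    (A : Matrix m m R) (B : Matrix m n R) (D : Matrix n n R)
    (hG : IsUnit (Matrix.fromBlocks A B 0 D)) : IsUnit A ∧ IsUnit D := by
  obtain ⟨u, hu⟩ := hG
  set N : Matrix (m ⊕ n) (m ⊕ n) R := (u⁻¹).val with hN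
  have hGN : Matrix.fromBlocks A B 0 D * N = 1 := by rw [← hu, hN]; exact u.mul_inv
  have hNG : N * Matrix.fromBlocks A B 0 D = 1 := by rw [← hu, hN]; exact u.inv_mul
  rw [← Matrix.fromBlocks_toBlocks N] at hGN hNG
  rw [Matrix.fromBlocks_multiply, ← Matrix.fromBlocks_one, Matrix.fromBlocks_inj] at hGN hNG
  obtain ⟨e11, -, -, -⟩ := hNG
  obtain ⟨-, -, -, e22⟩ := hGN
  rw [Matrix.mul_zero, add_zero] at e11
  rw [Matrix.zero_mul, zero_add] at e22
  exact ⟨⟨⟨A, N.toBlocks₁₁, sf_fintype hsf _ _ e11, e11⟩, rfl⟩,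
    ⟨⟨D, N.toBlocks₂₂, e22, sf_fintype hsf _ _ e22⟩, rfl⟩⟩

lemma tri_inverse (hsf : ∀ (j : ℕ) (U V : Matrix (Fin j) (Fin j) R), U * V = 1 → V * U = 1) {m n : Type*} [Fintype m] [DecidableEq m] [Fintype n] [DecidableEq n]
    (A : Matrix m m R) (B : Matrix m n R) (D : Matrix n n R)
    (hG : IsUnit (Matrix.fromBlocks A B 0 D)) :
    Ring.inverse (Matrix.fromBlocks A B 0 D) =
      Matrix.fromBlocks (Ring.inverse A)
        (-(Ring.inverse A * B * Ring.inverse D)) 0 (Ring.inverse D) := by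
  obtain ⟨hA, hD⟩ := tri_units hsf A B D hG
  set X := Matrix.fromBlocks (Ring.inverse A)
        (-(Ring.inverse A * B * Ring.inverse D)) 0 (Ring.inverse D) with hX
  have h12 : A * -(Ring.inverse A * B * Ring.inverse D) + B * Ring.inverse D = 0 := by
    rw [Matrix.mul_assoc (Ring.inverse A), Matrix.mul_neg, ← Matrix.mul_assoc,
      Ring.mul_inverse_cancel _ hA, Matrix.one_mul, neg_add_cancel]
  have hGX : Matrix.fromBlocks A B 0 D * X = 1 := by
    rw [hX, Matrix.fromBlocks_multiply]
    simp only [Matrix.mul_zero, add_zero, Matrix.zero_mul, zero_add,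
      Ring.mul_inverse_cancel _ hA, Ring.mul_inverse_cancel _ hD, h12,
      Matrix.fromBlocks_one]
  calc Ring.inverse (Matrix.fromBlocks A B 0 D)
      = Ring.inverse (Matrix.fromBlocks A B 0 D) * (Matrix.fromBlocks A B 0 D * X) := by
        rw [hGX, mul_one]
    _ = X := by rw [← mul_assoc, Ring.inverse_mul_cancel _ hG, one_mul]

end Aux

/-- Over a stably finite ring, an invertible block 3×3 upper-triangular matrix has invertible
diagonal blocks, and the compression `[0, C, C₂] · G⁻¹ · [B₁; B; 0]` equals `C · G₂₂⁻¹ · B`. -/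
theorem stmt_7 (R : Type*) [Ring R]
    (hsf : ∀ (j : ℕ) (U V : Matrix (Fin j) (Fin j) R), U * V = 1 → V * U = 1)
    (d₁ d₂ d₃ k l : Type*) [Fintype d₁] [DecidableEq d₁] [Fintype d₂] [DecidableEq d₂]
    [Fintype d₃] [DecidableEq d₃] [Fintype k] [Fintype l]
    (G₁₁ : Matrix d₁ d₁ R) (G₁₂ : Matrix d₁ d₂ R) (G₁₃ : Matrix d₁ d₃ R)
    (G₂₂ : Matrix d₂ d₂ R) (G₂₃ : Matrix d₂ d₃ R) (G₃₃ : Matrix d₃ d₃ R)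
    (hG : IsUnit (Matrix.fromBlocks (Matrix.fromBlocks G₁₁ G₁₂ 0 G₂₂)
        (Matrix.fromRows G₁₃ G₂₃) 0 G₃₃)) :
    IsUnit G₁₁ ∧ IsUnit G₂₂ ∧ IsUnit G₃₃ ∧
      ∀ (C : Matrix k d₂ R) (C₂ : Matrix k d₃ R) (B₁ : Matrix d₁ l R) (B : Matrix d₂ l R),
        Matrix.fromCols (Matrix.fromCols (0 : Matrix k d₁ R) C) C₂ *
            Ring.inverse (Matrix.fromBlocks (Matrix.fromBlocks G₁₁ G₁₂ 0 G₂₂)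
              (Matrix.fromRows G₁₃ G₂₃) 0 G₃₃) *
            Matrix.fromRows (Matrix.fromRows B₁ B) (0 : Matrix d₃ l R) =
          C * Ring.inverse G₂₂ * B := by
  obtain ⟨hM, hG3⟩ := tri_units hsf _ _ _ hG
  obtain ⟨h11, h22⟩ := tri_units hsf _ _ _ hM
  refine ⟨h11, h22, hG3, fun C C₂ B₁ B => ?_⟩
  rw [tri_inverse hsf _ _ _ hG, tri_inverse hsf _ _ _ hM]
  rw [Matrix.fromCols_mul_fromBlocks, Matrix.fromCols_mul_fromRows,
    Matrix.mul_zero, add_zero, Matrix.fromCols_mul_fromBlocks,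
    Matrix.fromCols_mul_fromRows]
  simp [Matrix.mul_assoc]
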